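/- arXiv:1512.07522 — 2 statements merged into one kernel-verified Lean document; each statement's English description precedes it below -/
import Mathlib

section
/- Let 𝒟' = (V,E') be a DAG with positive weights c'_{ki} > 0 for (k,i) ∈ E' and c'_{ii} > 0 for i ∈ V. Then the recursive max-linear values x' on 𝒟' with weights c' satisfy x'_i = max_{j∈V} b_{ji} z_j for every z ∈ [0,∞)^d and every i ∈ V if and only if all of the following hold: E^B ⊆ E', the reachability matrix of 𝒟' equals sgn(B), c'_{ii} = b_{ii} for all i ∈ V, c'_{ki} = b_{ki}/b_{kk} for all (k,i) ∈ E^B, and 0 < c'_{ki} ≤ b_{ki}/b_{kk} for all (k,i) ∈ E'∖E^B. -/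
open scoped NNReal ENNReal Classical

namespace MaxLinearDAG

variable {d : ℕ}

/-- `p` is a directed path (with at least one edge) from `j` to `i` in the edge relation `E`. -/
def PathFrom (E : Fin d → Fin d → Prop) (j i : Fin d) (p : List (Fin d)) : Prop :=
  2 ≤ p.length ∧ p.head? = some j ∧ p.getLast? = some i ∧ List.Chain' E p

/-- The directed graph given by `E` is acyclic: no directed path from a node to itself. -/
def Acyclic (E : Fin d → Fin d → Prop) : Prop :=
  ∀ i, ¬ ∃ p, PathFrom E i i p

/-- `j` is an ancestor of `i`: there is a path from `j` to `i`. -/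
def anc (E : Fin d → Fin d → Prop) (j i : Fin d) : Prop :=
  ∃ p, PathFrom E j i p

/-- The weight of a path `p` starting at `j`: `c j j` times the product of the
edge weights along `p`. -/
noncomputable def pathWeight (c : Fin d → Fin d → ℝ≥0) (j : Fin d) (p : List (Fin d)) : ℝ≥0 :=
  c j j * ((p.zip p.tail).map fun q => c q.1 q.2).prod

/-- `b` is the max-linear coefficient matrix of the recursive ML model on `(E, c)`:
for `j ∈ an(i)`, `b j i` is the (attained) maximum of the path weights over all paths
from `j` to `i`; `b i i = c i i`; and `b j i = 0` for `j ∉ An(i)`. -/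
def IsMLMatrix (E : Fin d → Fin d → Prop) (c b : Fin d → Fin d → ℝ≥0) : Prop :=
  (∀ i, b i i = c i i) ∧
  (∀ j i, j ≠ i → ¬ anc E j i → b j i = 0) ∧
  (∀ j i p, PathFrom E j i p → pathWeight c j p ≤ b j i) ∧
  (∀ j i, anc E j i → ∃ p, PathFrom E j i p ∧ pathWeight c j p = b j i)

/-- `x` is the vector of recursive max-linear values on `(E, c)` for noise `z`:
`x i = max (max_{k ∈ pa(i)} c k i * x k) (c i i * z i)`, empty max being `0`. -/
def IsRecML (E : Fin d → Fin d → Prop) (c : Fin d → Fin d → ℝ≥0) (z x : Fin d → ℝ≥0) : Prop :=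
  ∀ i, x i = (Finset.univ.sup fun k => if E k i then c k i * x k else 0) ⊔ c i i * z i

/-- Max-times matrix product `F ⊙ G`. -/
noncomputable def mprod (F G : Fin d → Fin d → ℝ≥0) : Fin d → Fin d → ℝ≥0 :=
  fun i j => Finset.univ.sup fun k => F i k * G k j

/-- Max-times matrix power, `mpow A 0` being the identity matrix. -/
noncomputable def mpow (A : Fin d → Fin d → ℝ≥0) : ℕ → Fin d → Fin d → ℝ≥0
  | 0 => fun i j => if i = j then 1 else 0
  | n + 1 => mprod (mpow A n) A

/-- `p` is a max-weighted path from `j` to `i`. -/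
def MaxWeighted (E : Fin d → Fin d → Prop) (c b : Fin d → Fin d → ℝ≥0)
    (j i : Fin d) (p : List (Fin d)) : Prop :=
  PathFrom E j i p ∧ pathWeight c j p = b j i

/-- The lowest max-weighted ancestors of `i` in `U`: nodes `j ∈ An(i) ∩ U` such that no
max-weighted path from `j` to `i` passes through a node of `U \ {j}`. -/
def AnLow (E : Fin d → Fin d → Prop) (c b : Fin d → Fin d → ℝ≥0)
    (U : Set (Fin d)) (i : Fin d) : Set (Fin d) :=
  {j | (anc E j i ∨ j = i) ∧ j ∈ U ∧
    ∀ p, MaxWeighted E c b j i p → ¬ ∃ u ∈ U \ {j}, u ∈ p}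

/-- The highest max-weighted descendants of `i` in `U`: nodes `l ∈ De(i) ∩ U` such that no
max-weighted path from `i` to `l` passes through a node of `U \ {l}`. -/
def DeHigh (E : Fin d → Fin d → Prop) (c b : Fin d → Fin d → ℝ≥0)
    (U : Set (Fin d)) (i : Fin d) : Set (Fin d) :=
  {l | (anc E i l ∨ l = i) ∧ l ∈ U ∧
    ∀ p, MaxWeighted E c b i l p → ¬ ∃ u ∈ U \ {l}, u ∈ p}

/-- product of edge weights along a list -/
noncomputable def chainProd (c : Fin d → Fin d → ℝ≥0) (p : List (Fin d)) : ℝ≥0 :=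
  ((p.zip p.tail).map fun q => c q.1 q.2).prod

lemma pathWeight_eq (c : Fin d → Fin d → ℝ≥0) (j : Fin d) (p : List (Fin d)) :
    pathWeight c j p = c j j * chainProd c p := rfl

lemma chainProd_cons₂ (c : Fin d → Fin d → ℝ≥0) (a b : Fin d) (t : List (Fin d)) :
    chainProd c (a :: b :: t) = c a b * chainProd c (b :: t) := rfl

lemma chainProd_singleton (c : Fin d → Fin d → ℝ≥0) (a : Fin d) :
    chainProd c [a] = 1 := rfl

lemma chainProd_append (c : Fin d → Fin d → ℝ≥0) :
    ∀ (p : List (Fin d)) (a : Fin d) (l : List (Fin d)),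
    chainProd c (p ++ a :: l) = chainProd c (p ++ [a]) * chainProd c (a :: l)
  | [], a, l => by simp [chainProd_singleton]
  | [x], a, l => by
      simp only [List.cons_append, List.nil_append, chainProd_cons₂, chainProd_singleton]
      ring
  | x :: y :: p, a, l => by
      have := chainProd_append c (y :: p) a l
      simp only [List.cons_append] at *
      rw [chainProd_cons₂, chainProd_cons₂]
      · rw [this]; ring

lemma chain'_pairs {α} {R : α → α → Prop} :
    ∀ {p : List α}, List.Chain' R p → ∀ x : α × α, x ∈ p.zip p.tail → R x.1 x.2
  | [], _, x, hx => by simp at hx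
  | [a], _, x, hx => by simp at hx
  | a :: b :: t, h, x, hx => by
      rw [List.Chain', List.isChain_cons_cons] at h
      rcases List.mem_cons.mp hx with h1 | hx
      · subst h1; exact h.1
      · exact chain'_pairs h.2 x (by exact hx)

end MaxLinearDAG

namespace MaxLinearDAG
variable {d : ℕ}

section Paths
variable {E : Fin d → Fin d → Prop} {c : Fin d → Fin d → ℝ≥0}

lemma anc_irrefl (hE : Acyclic E) (i : Fin d) : ¬ anc E i i := hE i

lemma PathFrom.ne_nil {j i : Fin d} {p : List (Fin d)} (hp : PathFrom E j i p) : p ≠ [] := by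
  intro h; rw [h] at hp; exact absurd hp.1 (by simp)

lemma pathFrom_cons {j i : Fin d} {p : List (Fin d)} (hp : PathFrom E j i p) :
    ∃ t, p = j :: t ∧ t ≠ [] := by
  obtain ⟨hl, hh, _, _⟩ := hp
  cases p with
  | nil => simp at hl
  | cons a t =>
    simp only [List.head?_cons, Option.some.injEq] at hh
    refine ⟨t, by rw [hh], ?_⟩
    intro h; rw [h] at hl; simp at hl

lemma pathFrom_trans {j k i : Fin d} {p q : List (Fin d)}
    (hp : PathFrom E j k p) (hq : PathFrom E k i q) :
    PathFrom E j i (p ++ q.tail) ∧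
      pathWeight c j (p ++ q.tail) * c k k = pathWeight c j p * pathWeight c k q := by
  obtain ⟨t, hqt, htne⟩ := pathFrom_cons hq
  subst hqt
  simp only [List.tail_cons]
  have hpne : p ≠ [] := hp.ne_nil
  have hplast : p.getLast hpne = k := by
    have := hp.2.2.1
    rwa [List.getLast?_eq_getLast hpne, Option.some.injEq] at this
  have hpsplit : p.dropLast ++ [k] = p := by
    rw [← hplast]; exact List.dropLast_append_getLast hpne
  have hlink : (∀ y ∈ t.head?, E k y) ∧ List.Chain' E t := by
    have hc := hq.2.2.2; rwa [List.Chain', List.isChain_cons] at hc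
  constructor
  · refine ⟨?_, ?_, ?_, ?_⟩
    · have := hp.1; rw [List.length_append]; omega
    · obtain ⟨s, hps, _⟩ := pathFrom_cons hp
      rw [hps]; rfl
    · rw [List.getLast?_append_of_ne_nil _ htne]
      have : (k :: t).getLast? = some i := hq.2.2.1
      rwa [show k :: t = [k] ++ t from rfl, List.getLast?_append_of_ne_nil _ htne] at this
    · rw [List.Chain', List.isChain_append]
      refine ⟨hp.2.2.2, hlink.2, ?_⟩
      intro x hx y hy
      rw [hp.2.2.1, Option.mem_some_iff] at hx
      subst hx
      exact hlink.1 y hy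
  · rw [pathWeight_eq, pathWeight_eq, pathWeight_eq]
    have h1 : p ++ t = p.dropLast ++ (k :: t) := by
      rw [← hpsplit]; simp
    rw [h1, chainProd_append, hpsplit]
    ring

lemma chainProd_pair (a b : Fin d) : chainProd c [a, b] = c a b := by
  simp [chainProd]

lemma pathFrom_edge {k i : Fin d} (hki : E k i) :
    PathFrom E k i [k, i] ∧ pathWeight c k [k, i] = c k k * c k i := by
  refine ⟨⟨by simp, rfl, rfl, List.isChain_pair.mpr hki⟩, ?_⟩
  rw [pathWeight_eq, chainProd_pair]

lemma last_step {j i : Fin d} {p : List (Fin d)} (hp : PathFrom E j i p) :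
    ∃ k, E k i ∧ pathWeight c j p = pathWeight c j p.dropLast * c k i ∧
      ((p.dropLast = [j] ∧ k = j) ∨ PathFrom E j k p.dropLast) := by
  have hpne : p ≠ [] := hp.ne_nil
  have hplast : p.getLast hpne = i := by
    have := hp.2.2.1
    rwa [List.getLast?_eq_getLast hpne, Option.some.injEq] at this
  have hpsplit : p.dropLast ++ [i] = p := by
    rw [← hplast]; exact List.dropLast_append_getLast hpne
  have hqlen : p.dropLast.length + 1 = p.length := by
    have h2 := List.length_dropLast (xs := p)
    have h1 := hp.1
    omega
  obtain ⟨q, hq⟩ : ∃ q, p.dropLast = q := ⟨_, rfl⟩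
  rw [hq] at hpsplit hqlen ⊢
  have hqne : q ≠ [] := by
    intro h; rw [h] at hqlen; have := hp.1; simp at hqlen; omega
  obtain ⟨k, hk⟩ : ∃ k, q.getLast hqne = k := ⟨_, rfl⟩
  have hqsplit : q.dropLast ++ [k] = q := by
    rw [← hk]; exact List.dropLast_append_getLast hqne
  have hchain : List.Chain' E q ∧ List.Chain' E [i] ∧
      ∀ x ∈ q.getLast?, ∀ y ∈ ([i] : List (Fin d)).head?, E x y := by
    rw [List.Chain', List.Chain', ← List.isChain_append, hpsplit]; exact hp.2.2.2
  have hqlast? : q.getLast? = some k := by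
    rw [List.getLast?_eq_getLast hqne, hk]
  have hEki : E k i := hchain.2.2 k (by rw [hqlast?]; rfl) i rfl
  have hqhead : q.head? = some j := by
    obtain ⟨t, hpt, htne⟩ := pathFrom_cons hp
    have : q = j :: t.dropLast := by
      rw [← hq, hpt, List.dropLast_cons_of_ne_nil htne]
    rw [this]; rfl
  refine ⟨k, hEki, ?_, ?_⟩
  · rw [pathWeight_eq, pathWeight_eq]
    have h1 : p = q.dropLast ++ (k :: [i]) := by
      rw [← hpsplit, ← hqsplit]; simp
    rw [h1, chainProd_append, hqsplit]
    have h2 : chainProd c (k :: [i]) = c k i := chainProd_pair k i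
    rw [h2]; ring
  · rcases Nat.lt_or_ge q.length 2 with hlt | hge
    · left
      obtain ⟨x, hx⟩ : ∃ x, q = [x] := by
        cases q with
        | nil => exact absurd rfl hqne
        | cons a t =>
          cases t with
          | nil => exact ⟨a, rfl⟩
          | cons b s => simp at hlt
      have hxj : x = j := by
        rw [hx] at hqhead; simpa using hqhead
      subst hxj
      refine ⟨hx, ?_⟩
      rw [hx] at hqlast?
      simpa using hqlast?.symm
    · right
      exact ⟨hge, hqhead, hqlast?, hchain.1⟩

lemma anc_trans {j k i : Fin d} (h1 : anc E j k) (h2 : anc E k i) : anc E j i := by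
  obtain ⟨p, hp⟩ := h1; obtain ⟨q, hq⟩ := h2
  exact ⟨_, (pathFrom_trans (c := fun _ _ => 1) hp hq).1⟩

lemma anc_ne {j i : Fin d} (hE : Acyclic E) (h : anc E j i) : j ≠ i := by
  rintro rfl; exact hE j h

lemma pathWeight_pos {j i : Fin d} {p : List (Fin d)}
    (hcd : ∀ i, 0 < c i i) (hce : ∀ k i, E k i → 0 < c k i)
    (hp : PathFrom E j i p) : 0 < pathWeight c j p := by
  rw [pathWeight_eq]
  refine mul_pos (hcd j) ?_
  rw [pos_iff_ne_zero]
  refine List.prod_ne_zero ?_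
  intro h0
  rw [List.mem_map] at h0
  obtain ⟨x, hx, hx0⟩ := h0
  exact absurd hx0.symm (ne_of_lt (hce _ _ (chain'_pairs hp.2.2.2 x hx)))

end Paths

section MLMat

variable {E : Fin d → Fin d → Prop} {c b : Fin d → Fin d → ℝ≥0}

lemma edge_anc {k i : Fin d} (hki : E k i) : anc E k i :=
  ⟨[k, i], (pathFrom_edge (c := fun _ _ => 1) hki).1⟩

variable (hE : Acyclic E) (hcd : ∀ i, 0 < c i i) (hce : ∀ k i, E k i → 0 < c k i)
  (hb : IsMLMatrix E c b)

include hb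

lemma b_diag_pos (hcd : ∀ i, 0 < c i i) (i : Fin d) : 0 < b i i := by
  rw [hb.1 i]; exact hcd i

include hcd hce in
lemma b_pos_of_anc {j i : Fin d} (h : anc E j i) : 0 < b j i := by
  obtain ⟨p, hp, hw⟩ := hb.2.2.2 j i h
  rw [← hw]; exact pathWeight_pos hcd hce hp

include hcd hce in
lemma b_pos_iff {j i : Fin d} : 0 < b j i ↔ (anc E j i ∨ j = i) := by
  constructor
  · intro h
    by_cases hji : j = i
    · exact Or.inr hji
    · by_contra hcon
      push_neg at hcon
      rw [hb.2.1 j i hji hcon.1] at h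
      exact lt_irrefl 0 h
  · rintro (h | rfl)
    · exact b_pos_of_anc hcd hce hb h
    · exact b_diag_pos hb hcd j

lemma edge_le {k i : Fin d} (hki : E k i) : b k k * c k i ≤ b k i := by
  have h := pathFrom_edge (c := c) hki
  have := hb.2.2.1 k i _ h.1
  rw [h.2, ← hb.1 k] at this
  exact this

lemma b_comp {j k i : Fin d} (h1 : anc E j k) (h2 : anc E k i) :
    b j k * b k i ≤ b k k * b j i := by
  obtain ⟨p, hp, hwp⟩ := hb.2.2.2 j k h1
  obtain ⟨q, hq, hwq⟩ := hb.2.2.2 k i h2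
  obtain ⟨hr, hw⟩ := pathFrom_trans (c := c) hp hq
  have hle := hb.2.2.1 j i _ hr
  calc b j k * b k i = pathWeight c j (p ++ q.tail) * c k k := by rw [hw, hwp, hwq]
    _ ≤ b j i * c k k := by exact mul_le_mul_left hle _
    _ = b k k * b j i := by rw [hb.1 k]; ring

lemma b_last_step {j i : Fin d} (h : anc E j i) :
    ∃ k, E k i ∧ (anc E j k ∨ j = k) ∧ b j k * b k i = b k k * b j i := by
  obtain ⟨p, hp, hw⟩ := hb.2.2.2 j i h
  obtain ⟨k, hki, hsplit, hcase⟩ := last_step hp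
  rcases hcase with ⟨hdl, rfl⟩ | hq
  · exact ⟨k, hki, Or.inr rfl, rfl⟩
  · refine ⟨k, hki, Or.inl ⟨_, hq⟩, le_antisymm (b_comp hb ⟨_, hq⟩ (edge_anc hki)) ?_⟩
    have h1 : pathWeight c j p.dropLast ≤ b j k := hb.2.2.1 j k _ hq
    have h2 : b k k * c k i ≤ b k i := edge_le hb hki
    calc b k k * b j i = b k k * (pathWeight c j p.dropLast * c k i) := by rw [← hw, hsplit]
      _ = pathWeight c j p.dropLast * (b k k * c k i) := by ring
      _ ≤ b j k * b k i := mul_le_mul' h1 h2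

end MLMat

section Rank

noncomputable def rankA (E : Fin d → Fin d → Prop) (i : Fin d) : ℕ :=
  (Finset.univ.filter fun m => anc E m i).card

variable {E : Fin d → Fin d → Prop}

lemma rankA_lt (hE : Acyclic E) {k l : Fin d} (h : anc E k l) : rankA E k < rankA E l := by
  refine Finset.card_lt_card ?_
  constructor
  · intro m hm
    rw [Finset.mem_filter] at hm ⊢
    exact ⟨hm.1, anc_trans hm.2 h⟩
  · intro hsub
    have hk : k ∈ Finset.univ.filter fun m => anc E m l := by
      rw [Finset.mem_filter]; exact ⟨Finset.mem_univ k, h⟩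
    have := hsub hk
    rw [Finset.mem_filter] at this
    exact hE k this.2

lemma rankA_lt_d (hE : Acyclic E) (k : Fin d) : rankA E k < d := by
  have : (Finset.univ.filter fun m => anc E m k) ⊂ Finset.univ := by
    rw [Finset.ssubset_univ_iff]
    intro h
    have : k ∈ Finset.univ.filter fun m => anc E m k := by rw [h]; exact Finset.mem_univ k
    rw [Finset.mem_filter] at this
    exact hE k this.2
  have := Finset.card_lt_card this
  simpa [rankA] using this

end Rank

section More
variable {E : Fin d → Fin d → Prop}

lemma pathFrom_imp_rel {R : Fin d → Fin d → Prop} (hR : ∀ a b, E a b → R a b)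
    (ht : ∀ a b cc, R a b → R b cc → R a cc) :
    ∀ (p : List (Fin d)) (j i : Fin d), PathFrom E j i p → R j i
  | [], j, i, hp => absurd hp.1 (by simp)
  | [x], j, i, hp => absurd hp.1 (by simp)
  | x :: y :: t, j, i, hp => by
    have hxj : x = j := by
      have := hp.2.1; simpa using this
    subst hxj
    have hExy : E x y := (List.isChain_cons_cons.mp hp.2.2.2).1
    cases t with
    | nil =>
      have hyi : y = i := by
        have := hp.2.2.1; simpa using this
      subst hyi
      exact hR x y hExy
    | cons z t' =>
      have htail : PathFrom E y i (y :: z :: t') := by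
        refine ⟨by simp, rfl, ?_, (List.isChain_cons_cons.mp hp.2.2.2).2⟩
        have := hp.2.2.1
        rwa [List.getLast?_cons_cons] at this
      exact ht x y i (hR x y hExy) (pathFrom_imp_rel hR ht (y :: z :: t') y i htail)

lemma no_self_loop (hE : Acyclic E) (i : Fin d) : ¬ E i i := fun h =>
  hE i ⟨[i, i], (pathFrom_edge (c := fun _ _ => 1) h).1⟩

lemma sup_ite_eq (j : Fin d) (f : Fin d → ℝ≥0) :
    (Finset.univ.sup fun m => if m = j then f m else 0) = f j := by
  apply le_antisymm
  · apply Finset.sup_le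
    intro m _
    by_cases h : m = j
    · subst h; simp
    · simp [h]
  · have := Finset.le_sup (f := fun m => if m = j then f m else 0) (Finset.mem_univ j)
    simpa using this

lemma sup_ite_eq' (j : Fin d) (f : Fin d → ℝ≥0) :
    (Finset.univ.sup fun m => if j = m then f m else 0) = f j := by
  rw [← sup_ite_eq j f]
  congr 1
  funext m
  rcases eq_or_ne m j with rfl | h
  · simp
  · simp [h, Ne.symm h]

lemma sup_if_pull (P : Prop) [Decidable P] (f : Fin d → ℝ≥0) :
    (Finset.univ.sup fun m => if P then f m else 0) = if P then Finset.univ.sup f else 0 := by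
  split
  · rfl
  · exact le_antisymm (Finset.sup_le fun _ _ => le_rfl) zero_le

lemma finset_sup_sup {s : Finset (Fin d)} {f g : Fin d → ℝ≥0} :
    (s.sup fun j => f j ⊔ g j) = s.sup f ⊔ s.sup g := Finset.sup_sup

lemma sup_mul_right (a b z : ℝ≥0) : (a ⊔ b) * z = a * z ⊔ b * z := by
  rcases le_total a b with h | h
  · rw [sup_eq_right.mpr h, sup_eq_right.mpr (mul_le_mul_left h z)]
  · rw [sup_eq_left.mpr h, sup_eq_left.mpr (mul_le_mul_left h z)]

end More

/-- Let `𝒟' = (V, E')` be a DAG with positive weights `c'`. The recursive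
max-linear values on `𝒟'` with weights `c'` equal `max_j b j i * z j` for every `z` iff all
of the following hold: `E^B ⊆ E'`, the reachability matrix of `𝒟'` equals `sgn(B)`,
`c' i i = b i i` for all `i`, `c' k i = b k i / b k k` for `(k,i) ∈ E^B`, and
`c' k i ≤ b k i / b k k` for `(k,i) ∈ E' ∖ E^B`. -/
theorem stmt12 {d : ℕ} (hd : 1 ≤ d) (E : Fin d → Fin d → Prop) (hE : Acyclic E)
    (c : Fin d → Fin d → ℝ≥0) (hcd : ∀ i, 0 < c i i) (hce : ∀ k i, E k i → 0 < c k i)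
    (b : Fin d → Fin d → ℝ≥0) (hb : IsMLMatrix E c b)
    (E' : Fin d → Fin d → Prop) (hE' : Acyclic E')
    (c' : Fin d → Fin d → ℝ≥0) (hc'e : ∀ k i, E' k i → 0 < c' k i)
    (hc'd : ∀ i, 0 < c' i i) :
    let edgeB : Fin d → Fin d → Prop := fun k i => E k i ∧
      (Finset.univ.sup fun l =>
        if anc E k l ∧ E l i then b k l * b l i / b l l else 0) < b k i
    (∀ z : Fin d → ℝ≥0,
        IsRecML E' c' z fun i => Finset.univ.sup fun j => b j i * z j) ↔
      ((∀ k i, edgeB k i → E' k i) ∧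
       (∀ j i, (anc E' j i ∨ j = i) ↔ 0 < b j i) ∧
       (∀ i, c' i i = b i i) ∧
       (∀ k i, edgeB k i → c' k i = b k i / b k k) ∧
       (∀ k i, E' k i → ¬ edgeB k i → c' k i ≤ b k i / b k k))  := by
  intro edgeB
  have hedgeB : ∀ k i, edgeB k i ↔ (E k i ∧
      (Finset.univ.sup fun l =>
        if anc E k l ∧ E l i then b k l * b l i / b l l else 0) < b k i) := fun _ _ => Iff.rfl
  have hbne : ∀ k : Fin d, b k k ≠ 0 := fun k => (b_diag_pos hb hcd k).ne'
  have huniv : (Finset.univ : Finset (Fin d)).Nonempty :=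
    ⟨⟨0, by omega⟩, Finset.mem_univ _⟩
  -- Step 1: reduce to the coefficient identity (star)
  have hred : (∀ z : Fin d → ℝ≥0,
        IsRecML E' c' z fun i => Finset.univ.sup fun j => b j i * z j) ↔
      (∀ j i, b j i = (Finset.univ.sup fun k => if E' k i then c' k i * b j k else 0)
        ⊔ (if i = j then c' i i else 0)) := by
    constructor
    · intro h j i
      have hz := h (fun m => if m = j then 1 else 0) i
      have hXz : ∀ m, (Finset.univ.sup fun j' => b j' m * if j' = j then 1 else 0) = b j m := by
        intro m
        simp only [mul_ite, mul_one, mul_zero]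
        exact sup_ite_eq j (fun j' => b j' m)
      simp only [hXz] at hz
      rw [hz]
      congr 1
      simp [mul_ite]
    · intro hstar z i
      show (Finset.univ.sup fun j => b j i * z j) =
        (Finset.univ.sup fun k => if E' k i then
          c' k i * Finset.univ.sup (fun j => b j k * z j) else 0) ⊔ c' i i * z i
      have step1 : (Finset.univ.sup fun j => b j i * z j) =
          Finset.univ.sup fun j =>
            ((Finset.univ.sup fun k => if E' k i then c' k i * b j k else 0) * z j)
            ⊔ ((if i = j then c' i i else 0) * z j) := by
        refine Finset.sup_congr rfl ?_
        intro j _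
        rw [← sup_mul_right, ← hstar j i]
      rw [step1, finset_sup_sup]
      congr 1
      · -- first summand
        have e1 : ∀ j : Fin d,
            (Finset.univ.sup fun k => if E' k i then c' k i * b j k else 0) * z j =
            Finset.univ.sup fun k => if E' k i then c' k i * (b j k * z j) else 0 := by
          intro j
          rw [NNReal.finset_sup_mul]
          refine Finset.sup_congr rfl ?_
          intro k _
          rw [ite_mul, zero_mul, mul_assoc]
        calc (Finset.univ.sup fun j =>
              (Finset.univ.sup fun k => if E' k i then c' k i * b j k else 0) * z j)
            = Finset.univ.sup fun j =>
              Finset.univ.sup fun k => if E' k i then c' k i * (b j k * z j) else 0 := by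
              exact Finset.sup_congr rfl fun j _ => e1 j
          _ = Finset.univ.sup fun k =>
              Finset.univ.sup fun j => if E' k i then c' k i * (b j k * z j) else 0 :=
              Finset.sup_comm _ _ _
          _ = Finset.univ.sup fun k => if E' k i then
                c' k i * Finset.univ.sup fun j => b j k * z j else 0 := by
              refine Finset.sup_congr rfl ?_
              intro k _
              rw [sup_if_pull, NNReal.mul_finset_sup]
      · -- diagonal summand
        have : (Finset.univ.sup fun j => (if i = j then c' i i else 0) * z j) =
            Finset.univ.sup fun j => if i = j then c' i i * z j else 0 := by
          refine Finset.sup_congr rfl ?_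
          intro j _
          rw [ite_mul, zero_mul]
        rw [this, sup_ite_eq' i (fun j => c' i i * z j)]
  rw [hred]
  constructor
  · -- Star → conditions
    intro hstar
    have hA : ∀ k i, E' k i → c' k i * b k k ≤ b k i := by
      intro k i h
      calc c' k i * b k k = (if E' k i then c' k i * b k k else 0) := by rw [if_pos h]
        _ ≤ Finset.univ.sup fun k' => if E' k' i then c' k' i * b k k' else 0 :=
            Finset.le_sup (f := fun k' => if E' k' i then c' k' i * b k k' else 0)
              (Finset.mem_univ k)
        _ ≤ _ ⊔ (if i = k then c' i i else 0) := le_sup_left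
        _ = b k i := (hstar k i).symm
    have hApos : ∀ k i, E' k i → 0 < b k i := fun k i h =>
      lt_of_lt_of_le (mul_pos (hc'e k i h) (b_diag_pos hb hcd k)) (hA k i h)
    have hAanc : ∀ k i, E' k i → anc E k i := by
      intro k i h
      rcases (b_pos_iff hcd hce hb).1 (hApos k i h) with h' | rfl
      · exact h'
      · exact absurd h (no_self_loop hE' k)
    have hcond3 : ∀ i, c' i i = b i i := by
      intro i
      have h1 := hstar i i
      rw [if_pos rfl] at h1
      have hsup0 : (Finset.univ.sup fun k => if E' k i then c' k i * b i k else 0) = 0 := by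
        refine le_antisymm (Finset.sup_le ?_) zero_le
        intro k _
        by_cases h : E' k i
        · rw [if_pos h]
          have hbik : b i k = 0 := by
            by_contra hne
            rcases (b_pos_iff hcd hce hb).1 (pos_iff_ne_zero.mpr hne) with hik | rfl
            · exact hE i (anc_trans hik (hAanc k i h))
            · exact no_self_loop hE' i h
          rw [hbik, mul_zero]
        · rw [if_neg h]
      rw [hsup0] at h1
      simpa using h1.symm
    have hcond2 : ∀ j i : Fin d, (anc E' j i ∨ j = i) ↔ 0 < b j i := by
      intro j i
      constructor
      · rintro (h | rfl)
        · obtain ⟨p, hp⟩ := h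
          exact b_pos_of_anc hcd hce hb
            (pathFrom_imp_rel (fun a b' hab => hAanc a b' hab)
              (fun a b' cc h1 h2 => anc_trans h1 h2) p j i hp)
        · exact b_diag_pos hb hcd j
      · intro hpos
        by_cases hji : j = i
        · exact Or.inr hji
        · left
          have main : ∀ n : ℕ, ∀ i' : Fin d, rankA E i' ≤ n →
              ∀ j' : Fin d, j' ≠ i' → 0 < b j' i' → anc E' j' i' := by
            intro n
            induction n with
            | zero =>
              intro i' hn j' hji' hpos'
              have h1 := hstar j' i'
              rw [if_neg (fun h => hji' h.symm)] at h1
              rw [sup_eq_left.mpr zero_le] at h1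
              obtain ⟨k, _, hk⟩ := Finset.exists_mem_eq_sup Finset.univ huniv
                (fun k => if E' k i' then c' k i' * b j' k else 0)
              rw [hk] at h1
              have hE'ki : E' k i' := by
                by_contra h
                rw [if_neg h] at h1
                exact absurd h1 hpos'.ne'
              rw [if_pos hE'ki] at h1
              have hbjk : 0 < b j' k := by
                by_contra h
                push_neg at h
                have : b j' k = 0 := le_antisymm h zero_le
                rw [this, mul_zero] at h1
                exact absurd h1 hpos'.ne'
              by_cases hkj : k = j'
              · subst hkj
                exact edge_anc hE'ki
              · exfalso
                have : rankA E k < rankA E i' := rankA_lt hE (hAanc k i' hE'ki)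
                omega
            | succ n ih =>
              intro i' hn j' hji' hpos'
              have h1 := hstar j' i'
              rw [if_neg (fun h => hji' h.symm)] at h1
              rw [sup_eq_left.mpr zero_le] at h1
              obtain ⟨k, _, hk⟩ := Finset.exists_mem_eq_sup Finset.univ huniv
                (fun k => if E' k i' then c' k i' * b j' k else 0)
              rw [hk] at h1
              have hE'ki : E' k i' := by
                by_contra h
                rw [if_neg h] at h1
                exact absurd h1 hpos'.ne'
              rw [if_pos hE'ki] at h1
              have hbjk : 0 < b j' k := by
                by_contra h
                push_neg at h
                have : b j' k = 0 := le_antisymm h zero_le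
                rw [this, mul_zero] at h1
                exact absurd h1 hpos'.ne'
              by_cases hkj : k = j'
              · subst hkj
                exact edge_anc hE'ki
              · have hranck : rankA E k ≤ n := by
                  have : rankA E k < rankA E i' := rankA_lt hE (hAanc k i' hE'ki)
                  omega
                exact anc_trans (ih k hranck j' (fun h => hkj h.symm) hbjk) (edge_anc hE'ki)
          exact main (rankA E i) i le_rfl j hji hpos
    have hcond5 : ∀ k i, E' k i → c' k i ≤ b k i / b k k := by
      intro k i h
      rw [le_div_iff₀ (pos_iff_ne_zero.mpr (hbne k))]
      exact hA k i h
    have hC1 : ∀ k i, edgeB k i → E' k i ∧ c' k i = b k i / b k k := by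
      intro k i hkB
      obtain ⟨hEki, hsuplt⟩ := (hedgeB k i).1 hkB
      have hancki : anc E k i := edge_anc hEki
      have hki : k ≠ i := anc_ne hE hancki
      have h1 := hstar k i
      rw [if_neg (fun h => hki h.symm)] at h1
      rw [sup_eq_left.mpr zero_le] at h1
      have hpos : 0 < b k i := b_pos_of_anc hcd hce hb hancki
      obtain ⟨m, _, hm⟩ := Finset.exists_mem_eq_sup Finset.univ huniv
        (fun m => if E' m i then c' m i * b k m else 0)
      rw [hm] at h1
      have hE'mi : E' m i := by
        by_contra h
        rw [if_neg h] at h1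
        exact absurd h1 hpos.ne'
      rw [if_pos hE'mi] at h1
      by_cases hmk : m = k
      · subst hmk
        exact ⟨hE'mi, (eq_div_iff (hbne m)).mpr h1.symm⟩
      · exfalso
        have hbkm : 0 < b k m := by
          by_contra h
          push_neg at h
          have : b k m = 0 := le_antisymm h zero_le
          rw [this, mul_zero] at h1
          exact absurd h1 hpos.ne'
        have hanckm : anc E k m := by
          rcases (b_pos_iff hcd hce hb).1 hbkm with h | rfl
          · exact h
          · exact absurd rfl hmk
        have hancmi : anc E m i := hAanc m i hE'mi
        have h2 : b k i * b m m ≤ b k m * b m i := by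
          calc b k i * b m m = (c' m i * b m m) * b k m := by rw [h1]; ring
            _ ≤ b m i * b k m := mul_le_mul_left (hA m i hE'mi) _
            _ = b k m * b m i := mul_comm _ _
        obtain ⟨l, hEli, hml, h3⟩ := b_last_step hb hancmi
        have hanckl : anc E k l := by
          rcases hml with h | rfl
          · exact anc_trans hanckm h
          · exact hanckm
        have h4 : b k m * b m l ≤ b m m * b k l := by
          rcases hml with h | rfl
          · exact b_comp hb hanckm h
          · exact le_of_eq (mul_comm _ _)
        have h5 : (b k i * b l l) * b m m ≤ (b k l * b l i) * b m m := by
          calc (b k i * b l l) * b m m = (b k i * b m m) * b l l := by ring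
            _ ≤ (b k m * b m i) * b l l := mul_le_mul_left h2 _
            _ = b k m * (b l l * b m i) := by ring
            _ = b k m * (b m l * b l i) := by rw [h3]
            _ = (b k m * b m l) * b l i := by ring
            _ ≤ (b m m * b k l) * b l i := mul_le_mul_left h4 _
            _ = (b k l * b l i) * b m m := by ring
        have h6 : b k i * b l l ≤ b k l * b l i :=
          (mul_le_mul_iff_of_pos_right (b_diag_pos hb hcd m)).1 h5
        have h7 : b k i ≤ Finset.univ.sup
            (fun l' => if anc E k l' ∧ E l' i then b k l' * b l' i / b l' l' else 0) := by
          refine le_trans ?_ (Finset.le_sup (Finset.mem_univ l))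
          rw [if_pos ⟨hanckl, hEli⟩, le_div_iff₀ (pos_iff_ne_zero.mpr (hbne l))]
          exact h6
        exact absurd hsuplt (not_lt.mpr h7)
    refine ⟨fun k i h => (hC1 k i h).1, hcond2, hcond3, fun k i h => (hC1 k i h).2, ?_⟩
    exact fun k i h _ => hcond5 k i h
  · -- conditions → Star
    rintro ⟨hcond1, hcond2, hcond3, hcond4, hcond5⟩
    have hc'le : ∀ k i, E' k i → c' k i ≤ b k i / b k k := by
      intro k i h
      by_cases hB : edgeB k i
      · rw [hcond4 k i hB]
      · exact hcond5 k i h hB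
    -- key existence of an edgeB edge realizing the max
    have hL : ∀ j i : Fin d, anc E j i →
        ∃ k, edgeB k i ∧ (anc E j k ∨ j = k) ∧ b j k * b k i = b k k * b j i := by
      intro j i hanc
      obtain ⟨k0, hk0E, hk0o, hk0eq⟩ := b_last_step hb hanc
      have key : ∀ n : ℕ, ∀ k : Fin d, d ≤ rankA E k + n → E k i →
          (anc E j k ∨ j = k) → b j k * b k i = b k k * b j i →
          ∃ k', edgeB k' i ∧ (anc E j k' ∨ j = k') ∧ b j k' * b k' i = b k' k' * b j i := by
        intro n
        induction n with
        | zero =>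
          intro k hn _ _ _
          have := rankA_lt_d hE k
          omega
        | succ n ih =>
          intro k hn hEk horj heq
          by_cases hB : edgeB k i
          · exact ⟨k, hB, horj, heq⟩
          · have hsup : b k i ≤ Finset.univ.sup
                (fun l => if anc E k l ∧ E l i then b k l * b l i / b l l else 0) := by
              by_contra hc
              exact hB ((hedgeB k i).2 ⟨hEk, not_le.1 hc⟩)
            have hpos : 0 < b k i := b_pos_of_anc hcd hce hb (edge_anc hEk)
            obtain ⟨l, _, hl⟩ := Finset.exists_mem_eq_sup Finset.univ huniv
              (fun l => if anc E k l ∧ E l i then b k l * b l i / b l l else 0)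
            rw [hl] at hsup
            have hcond' : anc E k l ∧ E l i := by
              by_contra h
              rw [if_neg h] at hsup
              exact absurd (lt_of_lt_of_le hpos hsup) (lt_irrefl 0)
            rw [if_pos hcond', le_div_iff₀ (pos_iff_ne_zero.mpr (hbne l))] at hsup
            have hancjl : anc E j l := by
              rcases horj with h | rfl
              · exact anc_trans h hcond'.1
              · exact hcond'.1
            have hjk : b j k * b k l ≤ b k k * b j l := by
              rcases horj with h | rfl
              · exact b_comp hb h hcond'.1
              · exact le_rfl
            have hle1 : (b l l * b j i) * b k k ≤ (b j l * b l i) * b k k := by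
              calc (b l l * b j i) * b k k = (b k k * b j i) * b l l := by ring
                _ = (b j k * b k i) * b l l := by rw [heq]
                _ = b j k * (b k i * b l l) := by ring
                _ ≤ b j k * (b k l * b l i) := mul_le_mul_right hsup _
                _ = (b j k * b k l) * b l i := by ring
                _ ≤ (b k k * b j l) * b l i := mul_le_mul_left hjk _
                _ = (b j l * b l i) * b k k := by ring
            have hge : b l l * b j i ≤ b j l * b l i :=
              (mul_le_mul_iff_of_pos_right (b_diag_pos hb hcd k)).1 hle1
            have heq' : b j l * b l i = b l l * b j i :=
              le_antisymm (b_comp hb hancjl (edge_anc hcond'.2)) hge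
            have hrank : rankA E k < rankA E l := rankA_lt hE hcond'.1
            exact ih l (by omega) hcond'.2 (Or.inl hancjl) heq'
      exact key d k0 (by omega) hk0E hk0o hk0eq
    intro j i
    apply le_antisymm
    · -- b j i ≤ RHS
      by_cases hb0 : b j i = 0
      · rw [hb0]; exact zero_le
      · rcases (b_pos_iff hcd hce hb).1 (pos_iff_ne_zero.mpr hb0) with hanc | rfl
        · obtain ⟨k, hkB, _, hkeq⟩ := hL j i hanc
          have hE'ki : E' k i := hcond1 k i hkB
          have hterm : c' k i * b j k = b j i := by
            rw [hcond4 k i hkB, div_mul_eq_mul_div, mul_comm (b k i) (b j k), hkeq,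
              mul_comm (b k k) (b j i), mul_div_assoc, div_self (hbne k), mul_one]
          calc b j i = c' k i * b j k := hterm.symm
            _ = (if E' k i then c' k i * b j k else 0) := (if_pos hE'ki).symm
            _ ≤ Finset.univ.sup fun k' => if E' k' i then c' k' i * b j k' else 0 :=
                Finset.le_sup (f := fun k' => if E' k' i then c' k' i * b j k' else 0)
                  (Finset.mem_univ k)
            _ ≤ _ := le_sup_left
        · refine le_trans ?_ le_sup_right
          rw [if_pos rfl, hcond3 j]
    · -- RHS ≤ b j i
      refine sup_le (Finset.sup_le ?_) ?_
      · intro k _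
        by_cases hE'ki : E' k i
        · rw [if_pos hE'ki]
          have hbki : 0 < b k i := (hcond2 k i).1 (Or.inl (edge_anc hE'ki))
          have hancki : anc E k i := by
            rcases (b_pos_iff hcd hce hb).1 hbki with h | rfl
            · exact h
            · exact absurd hE'ki (no_self_loop hE' k)
          by_cases hbjk : b j k = 0
          · rw [hbjk, mul_zero]; exact zero_le
          · have hc'k := hc'le k i hE'ki
            rcases (b_pos_iff hcd hce hb).1 (pos_iff_ne_zero.mpr hbjk) with hjk | rfl
            · calc c' k i * b j k ≤ (b k i / b k k) * b j k :=
                    mul_le_mul_left hc'k _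
                _ = (b k i * b j k) / b k k := by rw [div_mul_eq_mul_div]
                _ ≤ b j i := by
                    rw [div_le_iff₀ (pos_iff_ne_zero.mpr (hbne k))]
                    calc b k i * b j k = b j k * b k i := mul_comm _ _
                      _ ≤ b k k * b j i := b_comp hb hjk hancki
                      _ = b j i * b k k := mul_comm _ _
            · calc c' j i * b j j ≤ (b j i / b j j) * b j j := mul_le_mul_left hc'k _
                _ = b j i := div_mul_cancel₀ _ (hbne j)
        · rw [if_neg hE'ki]; exact zero_le
      · by_cases hij : i = j
        · subst hij
          rw [if_pos rfl, hcond3 i]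
        · rw [if_neg hij]; exact zero_le
end MaxLinearDAG
end

section
/- Let B = (b_{ij})_{d×d} be a nonnegative matrix such that sgn(B) is the reachability matrix of some DAG on V = {1,…,d} (in particular b_{ii} > 0 for all i, and the relation j ≺ i defined by j ≠ i and b_{ji} > 0 is transitive and irreflexive). Set B_0 = (b_{ij}/b_{ii})_{d×d}. Then there exist a DAG 𝒟' = (V,E') and positive weights c'_{ki} > 0 ((k,i) ∈ E') and c'_{ii} > 0 (i ∈ V) such that the recursive max-linear values x' on 𝒟' satisfy x'_i = max_{j∈V} b_{ji} z_j for every z ∈ [0,∞)^d and every i ∈ V, if and only if B = B ⊙ B_0; equivalently, if and only if B = A ∨ (B ⊙ (B_0 − id)), where A = diag(b_{11},…,b_{dd}) and ∨ is the entrywise maximum. -/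
open scoped NNReal ENNReal Classical

namespace MaxLinearDAG

variable {d : ℕ}

private lemma transGen_of_pathFrom {R : Fin d → Fin d → Prop} :
    ∀ (p : List (Fin d)) {j i : Fin d}, PathFrom R j i p → Relation.TransGen R j i := by
  intro p
  induction p with
  | nil => intro j i h; simp [PathFrom] at h
  | cons a q ih =>
    intro j i h
    obtain ⟨hlen, hhead, hlast, hchain⟩ := h
    have haj : a = j := by simpa using hhead
    subst haj
    cases q with
    | nil => simp at hlen
    | cons b r =>
      have hab : R a b ∧ List.Chain' R (b :: r) := List.isChain_cons_cons.mp hchain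
      cases r with
      | nil =>
        have hbi : b = i := by simpa using hlast
        subst hbi
        exact Relation.TransGen.single hab.1
      | cons c s =>
        have hpath : PathFrom R b i (b :: c :: s) := by
          refine ⟨by simp, rfl, ?_, hab.2⟩
          rw [List.getLast?_cons_cons] at hlast
          exact hlast
        exact Relation.TransGen.head hab.1 (ih hpath)

private lemma pathFrom_of_transGen {R : Fin d → Fin d → Prop} {j i : Fin d}
    (h : Relation.TransGen R j i) : ∃ p, PathFrom R j i p := by
  induction h with
  | @single c hc => exact ⟨[j, c], by norm_num, rfl, by simp, List.isChain_pair.2 hc⟩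
  | @tail k c hjk hkc ih =>
    obtain ⟨p, hlen, hh, hl, hch⟩ := ih
    refine ⟨p ++ [c], ?_, ?_, by simp, ?_⟩
    · simp only [List.length_append, List.length_cons, List.length_nil]
      omega
    · cases p with
      | nil => simp at hh
      | cons x xs => simpa using hh
    · refine List.IsChain.append hch (List.isChain_singleton c) ?_
      intro x hx y hy
      simp only [List.head?_cons, Option.mem_some_iff] at hy
      rw [hl] at hx
      simp only [Option.mem_some_iff] at hx
      subst hx; subst hy
      exact hkc

private lemma anc_iff_transGen {R : Fin d → Fin d → Prop} {j i : Fin d} :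
    anc R j i ↔ Relation.TransGen R j i :=
  ⟨fun ⟨p, hp⟩ => transGen_of_pathFrom p hp, pathFrom_of_transGen⟩

private lemma anc_of_edge {R : Fin d → Fin d → Prop} {j i : Fin d} (h : R j i) : anc R j i :=
  anc_iff_transGen.2 (Relation.TransGen.single h)

private lemma not_edge_self {R : Fin d → Fin d → Prop} (h : Acyclic R) (i : Fin d) : ¬ R i i :=
  fun hR => h i (anc_of_edge hR)

private lemma anc_trans_s14 {R : Fin d → Fin d → Prop} {a b c : Fin d}
    (hab : anc R a b) (hbc : anc R b c) : anc R a c :=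
  anc_iff_transGen.2 ((anc_iff_transGen.1 hab).trans (anc_iff_transGen.1 hbc))

private lemma anc_of_transGen_anc {R : Fin d → Fin d → Prop} {a c : Fin d}
    (h : Relation.TransGen (anc R) a c) : anc R a c := by
  induction h with
  | single h' => exact h'
  | tail _ h2' ih => exact anc_trans_s14 ih h2'

private lemma sup_indicator (f : Fin d → ℝ≥0) (j : Fin d) :
    (Finset.univ.sup fun m => f m * (if m = j then (1:ℝ≥0) else 0)) = f j := by
  apply le_antisymm
  · exact Finset.sup_le fun m _ => by by_cases h : m = j <;> simp [h]
  · simpa using Finset.le_sup (f := fun m => f m * (if m = j then (1:ℝ≥0) else 0))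
      (Finset.mem_univ j)


private lemma recml_construct (b : Fin d → Fin d → ℝ≥0) (hbd' : ∀ i : Fin d, b i i ≠ 0)
    (hBle : ∀ j k i : Fin d, b j k * (b k i / b k k) ≤ b j i) (z : Fin d → ℝ≥0) :
    IsRecML (fun k i => k ≠ i ∧ 0 < b k i)
      (fun k i => if k = i then b i i else b k i / b k k)
      z (fun i => Finset.univ.sup fun j => b j i * z j) := by
  intro i
  dsimp only
  apply le_antisymm
  · apply Finset.sup_le
    intro j _
    by_cases hji : j = i
    · subst hji
      refine le_sup_of_le_right (le_of_eq ?_)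
      simp
    · by_cases hb0 : b j i = 0
      · simp [hb0]
      · have hEji : j ≠ i ∧ 0 < b j i := ⟨hji, pos_iff_ne_zero.mpr hb0⟩
        refine le_sup_of_le_left (le_trans ?_ (Finset.le_sup (Finset.mem_univ j)))
        rw [if_pos hEji, if_neg hji]
        calc b j i * z j = (b j i / b j j) * (b j j * z j) := by
              rw [← mul_assoc, div_mul_cancel₀ _ (hbd' j)]
          _ ≤ (b j i / b j j) * (Finset.univ.sup fun m => b m j * z m) :=
              mul_le_mul_right (Finset.le_sup (f := fun m => b m j * z m)
                (Finset.mem_univ j)) _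
  · apply sup_le
    · apply Finset.sup_le
      intro k _
      by_cases hk : k ≠ i ∧ 0 < b k i
      · rw [if_pos hk, if_neg hk.1, NNReal.mul_finset_sup]
        apply Finset.sup_le
        intro m _
        calc b k i / b k k * (b m k * z m) = (b m k * (b k i / b k k)) * z m := by ring
          _ ≤ b m i * z m := mul_le_mul_left (hBle m k i) _
          _ ≤ _ := Finset.le_sup (f := fun j => b j i * z j) (Finset.mem_univ m)
      · rw [if_neg hk]
        exact zero_le
    · refine le_trans (le_of_eq ?_) (Finset.le_sup (f := fun j => b j i * z j)
        (Finset.mem_univ i))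
      simp

/-- Let `B` be a nonnegative matrix such that `sgn(B)` is the reachability
matrix of some DAG (witnessed by `E`), and set `B0 = (b i j / b i i)`. Then there exist a
DAG `𝒟'` and positive weights `c'` whose recursive max-linear values equal
`max_j b j i * z j` for every `z`, iff `B = B ⊙ B0`; equivalently, iff
`B = A ∨ (B ⊙ (B0 − id))` with `A = diag(b 1 1, …, b d d)`. -/
theorem stmt14 {d : ℕ} (hd : 1 ≤ d) (b : Fin d → Fin d → ℝ≥0)
    (E : Fin d → Fin d → Prop) (hE : Acyclic E)
    (hsgn : ∀ j i, 0 < b j i ↔ (anc E j i ∨ j = i)) :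
    let B0 : Fin d → Fin d → ℝ≥0 := fun i j => b i j / b i i
    let A : Fin d → Fin d → ℝ≥0 := fun i j => if i = j then b i i else 0
    let idm : Fin d → Fin d → ℝ≥0 := fun i j => if i = j then 1 else 0
    ((∃ (E' : Fin d → Fin d → Prop) (c' : Fin d → Fin d → ℝ≥0), Acyclic E' ∧
        (∀ k i, E' k i → 0 < c' k i) ∧ (∀ i, 0 < c' i i) ∧
        ∀ z : Fin d → ℝ≥0,
          IsRecML E' c' z fun i => Finset.univ.sup fun j => b j i * z j) ↔
      ∀ j i, b j i = mprod b B0 j i) ∧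
    ((∀ j i, b j i = mprod b B0 j i) ↔
      ∀ j i, b j i = A j i ⊔ mprod b (fun a a' => B0 a a' - idm a a') j i) := by
  intro B0 A idm
  have hB0 : ∀ i j : Fin d, B0 i j = b i j / b i i := fun _ _ => rfl
  have hbd : ∀ i : Fin d, (0:ℝ≥0) < b i i := fun i => (hsgn i i).2 (Or.inr rfl)
  have hbd' : ∀ i : Fin d, b i i ≠ 0 := fun i => (hbd i).ne'
  have hG : ∀ k i : Fin d, B0 k i - idm k i = if k = i then 0 else B0 k i := by
    intro k i
    by_cases hk : k = i
    · subst hk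
      rw [if_pos rfl, hB0, div_self (hbd' k)]
      simp [idm]
    · rw [if_neg hk]
      have : idm k i = 0 := if_neg hk
      rw [this, tsub_zero]
  constructor
  · constructor
    · -- forward: existence → b = b ⊙ B0
      rintro ⟨E', c', hE', hc', hcd', hrec⟩
      have star : ∀ j i : Fin d,
          b j i = (Finset.univ.sup fun k => if E' k i then c' k i * b j k else 0)
            ⊔ c' i i * (if i = j then 1 else 0) := by
        intro j i
        have h := hrec (fun m => if m = j then 1 else 0) i
        simpa only [sup_indicator] using h
      have hstar1 : ∀ j k i : Fin d, E' k i → c' k i * b j k ≤ b j i := by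
        intro j k i hk
        calc c' k i * b j k = (if E' k i then c' k i * b j k else 0) := (if_pos hk).symm
          _ ≤ Finset.univ.sup fun k => if E' k i then c' k i * b j k else 0 :=
              Finset.le_sup (f := fun k => if E' k i then c' k i * b j k else 0)
                (Finset.mem_univ k)
          _ ≤ b j i := by rw [star j i]; exact le_sup_left
      have hcd : ∀ i : Fin d, c' i i ≤ b i i := by
        intro i
        calc c' i i = c' i i * (if i = i then (1:ℝ≥0) else 0) := by simp
          _ ≤ (Finset.univ.sup fun k => if E' k i then c' k i * b i k else 0)
              ⊔ c' i i * (if i = i then (1:ℝ≥0) else 0) := le_sup_right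
          _ = b i i := (star i i).symm
      have hE'anc : ∀ k i : Fin d, E' k i → anc E k i := by
        intro k i hk
        have hne : k ≠ i := fun h => not_edge_self hE' i (h ▸ hk)
        have hpos : 0 < b k i :=
          lt_of_lt_of_le (mul_pos (hc' k i hk) (hbd k)) (hstar1 k k i hk)
        exact ((hsgn k i).1 hpos).resolve_right hne
      have hancT : Transitive (anc E) := fun a b c h1 h2 => anc_trans_s14 h1 h2
      have hancI : Irreflexive (anc E) := fun a h => hE a h
      have wf : WellFounded (anc E) :=
        @Finite.wellFounded_of_trans_of_irrefl _ _ _ ⟨hancT⟩ ⟨hancI⟩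
      have main : ∀ i j k : Fin d, b j k * b k i ≤ b j i * b k k := by
        intro i
        refine wf.induction (C := fun i => ∀ j k : Fin d, b j k * b k i ≤ b j i * b k k) i ?_
        intro i IH j k
        rw [star k i, mul_max]
        apply sup_le
        · rw [NNReal.mul_finset_sup]
          apply Finset.sup_le
          intro m _
          by_cases hm : E' m i
          · rw [if_pos hm]
            calc b j k * (c' m i * b k m) = c' m i * (b j k * b k m) := by ring
              _ ≤ c' m i * (b j m * b k k) := mul_le_mul_right (IH m (hE'anc m i hm) j k) _
              _ = (c' m i * b j m) * b k k := by ring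
              _ ≤ b j i * b k k := mul_le_mul_left (hstar1 j m i hm) _
          · rw [if_neg hm, mul_zero]
            exact zero_le
        · by_cases hik : i = k
          · rw [if_pos hik, mul_one, hik]
            exact mul_le_mul_right (hcd k) _
          · rw [if_neg hik, mul_zero, mul_zero]
            exact zero_le
      intro j i
      apply le_antisymm
      · simp only [mprod]
        calc b j i = b j i * B0 i i := by rw [hB0, div_self (hbd' i), mul_one]
          _ ≤ _ := Finset.le_sup (f := fun k => b j k * B0 k i) (Finset.mem_univ i)
      · simp only [mprod]
        apply Finset.sup_le
        intro k _
        rw [hB0, ← mul_div_assoc]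
        exact (div_le_iff₀ (hbd k)).2 (main i j k)
    · -- backward: b = b ⊙ B0 → existence
      intro hB
      have hBle : ∀ j k i : Fin d, b j k * (b k i / b k k) ≤ b j i := by
        intro j k i
        rw [hB j i]
        exact Finset.le_sup (f := fun k => b j k * B0 k i) (Finset.mem_univ k)
      refine ⟨fun k i => k ≠ i ∧ 0 < b k i,
        fun k i => if k = i then b i i else b k i / b k k, ?_, ?_, ?_,
        recml_construct b hbd' hBle⟩
      · rintro i ⟨p, hp⟩
        have h1 : Relation.TransGen (fun k i : Fin d => k ≠ i ∧ 0 < b k i) i i :=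
          transGen_of_pathFrom p hp
        have h2 : Relation.TransGen (anc E) i i :=
          Relation.TransGen.mono (fun a c (h : a ≠ c ∧ 0 < b a c) => ((hsgn a c).1 h.2).resolve_right h.1) i i h1
        exact hE i (anc_of_transGen_anc h2)
      · intro k i hk
        show (0:ℝ≥0) < if k = i then b i i else b k i / b k k
        rw [if_neg hk.1]
        exact div_pos hk.2 (hbd k)
      · intro i
        show (0:ℝ≥0) < if i = i then b i i else b i i / b i i
        rw [if_pos rfl]
        exact hbd i
  · -- second equivalence
    have hsplit : ∀ j i : Fin d,
        mprod b B0 j i = b j i ⊔ mprod b (fun a a' => B0 a a' - idm a a') j i := by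
      intro j i
      simp only [mprod]
      apply le_antisymm
      · apply Finset.sup_le
        intro k _
        by_cases hk : k = i
        · subst hk
          refine le_sup_of_le_left (le_of_eq ?_)
          rw [hB0, div_self (hbd' k), mul_one]
        · refine le_sup_of_le_right ?_
          have : b j k * B0 k i = b j k * (B0 k i - idm k i) := by rw [hG, if_neg hk]
          rw [this]
          exact Finset.le_sup (f := fun k => b j k * (B0 k i - idm k i)) (Finset.mem_univ k)
      · apply sup_le
        · have h1 : b j i = b j i * B0 i i := by rw [hB0, div_self (hbd' i), mul_one]
          rw [h1]
          exact Finset.le_sup (f := fun k => b j k * B0 k i) (Finset.mem_univ i)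
        · apply Finset.sup_le
          intro k _
          by_cases hk : k = i
          · rw [hG, if_pos hk, mul_zero]
            exact zero_le
          · rw [hG, if_neg hk]
            exact Finset.le_sup (f := fun k => b j k * B0 k i) (Finset.mem_univ k)
    constructor
    · intro h j i
      by_cases hji : j = i
      · subst hji
        have hle : mprod b (fun a a' => B0 a a' - idm a a') j j ≤ b j j := by
          simp only [mprod]
          apply Finset.sup_le
          intro k _
          by_cases hk : k = j
          · rw [hG, if_pos hk, mul_zero]
            exact zero_le
          · rw [hG, if_neg hk]
            by_cases hb0 : b j k = 0
            · simp [hb0]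
            · have hanc1 : anc E j k := ((hsgn j k).1 (pos_iff_ne_zero.mpr hb0)).resolve_right
                (fun h' => hk h'.symm)
              have hbk0 : b k j = 0 := by
                by_contra h'
                have hanc2 : anc E k j :=
                  ((hsgn k j).1 (pos_iff_ne_zero.mpr h')).resolve_right hk
                exact hE j (anc_trans_s14 hanc1 hanc2)
              rw [hB0, hbk0, zero_div, mul_zero]
              exact zero_le
        have hA : A j j = b j j := if_pos rfl
        rw [hA, sup_eq_left.mpr hle]
      · have hA : A j i = 0 := if_neg hji
        have h1 : mprod b (fun a a' => B0 a a' - idm a a') j i ≤ b j i := by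
          conv_rhs => rw [h j i, hsplit j i]
          exact le_sup_right
        have h2 : b j i ≤ mprod b (fun a a' => B0 a a' - idm a a') j i := by
          have : b j i = b j j * (B0 j i - idm j i) := by
            rw [hG, if_neg hji, hB0, mul_comm, div_mul_cancel₀ _ (hbd' j)]
          rw [this]
          exact Finset.le_sup (f := fun k => b j k * (B0 k i - idm k i)) (Finset.mem_univ j)
        rw [hA]
        rw [sup_comm, sup_eq_left.mpr zero_le]
        exact le_antisymm h2 h1
    · intro h j i
      rw [hsplit j i]
      have hle : mprod b (fun a a' => B0 a a' - idm a a') j i ≤ b j i :=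
        le_sup_right.trans (h j i).ge
      exact (sup_eq_left.mpr hle).symm
end MaxLinearDAG
end
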